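/- Consider the directed n-cycle (n ≥ 2) with unit-weight clockwise edges only (edge i → i+1 mod n, weight 1). Let k = n, c = ⌊3n/4⌋ + 1, and for each i ∈ {0,…,n−1} let s_i = i and t_i = i + ⌊3n/4⌋ (mod n). Then there exists a unique collection of paths P_0,…,P_{n−1} with P_i a shortest s_i-t_i path, every vertex lies on exactly ⌊3n/4⌋+1 of the paths (so every vertex is max-congestion with congestion c), and no single path P_i contains all vertices of the cycle. Hence Lemma 2.3 fails for general directed graphs with constant 3 (taking d = k − c). -/

import Mathlib

def cwWalk (n : ℕ) (l : List (ZMod n)) : Prop :=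
  l.Chain' (fun i j => j = i + 1)

def IsShortestCWPath (n : ℕ) (l : List (ZMod n)) (s t : ZMod n) : Prop :=
  cwWalk n l ∧ l.head? = some s ∧ l.getLast? = some t ∧
    ∀ l' : List (ZMod n), cwWalk n l' → l'.head? = some s → l'.getLast? = some t →
      l.length ≤ l'.length

def canon (n : ℕ) (s : ZMod n) (L : ℕ) : List (ZMod n) :=
  (List.range (L + 1)).map (fun j : ℕ => s + (j : ZMod n))

lemma canon_cw (n : ℕ) (s : ZMod n) (L : ℕ) : cwWalk n (canon n s L) := by
  unfold cwWalk canon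
  rw [List.Chain', List.isChain_map]
  rw [List.isChain_range_succ]
  intro m _
  push_cast
  ring

lemma canon_head (n : ℕ) (s : ZMod n) (L : ℕ) : (canon n s L).head? = some s := by
  unfold canon
  rw [List.range_succ_eq_map]
  simp

lemma canon_last (n : ℕ) (s : ZMod n) (L : ℕ) : (canon n s L).getLast? = some (s + L) := by
  unfold canon
  rw [List.getLast?_eq_getElem?]
  simp

lemma canon_length (n : ℕ) (s : ZMod n) (L : ℕ) : (canon n s L).length = L + 1 := by
  simp [canon]

lemma cw_shape {n : ℕ} : ∀ (l : List (ZMod n)) (s : ZMod n), cwWalk n l → l.head? = some s →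
    ∃ L, l = canon n s L := by
  intro l
  induction l with
  | nil => intro s _ hs; simp at hs
  | cons a t ih =>
    intro s hc hs
    simp only [List.head?_cons, Option.some.injEq] at hs
    subst hs
    rw [cwWalk, List.Chain', List.isChain_cons] at hc
    obtain ⟨h1, h2⟩ := hc
    cases t with
    | nil =>
      refine ⟨0, ?_⟩
      simp [canon, List.range_succ]
    | cons b t' =>
      have hb : b = a + 1 := h1 b rfl
      obtain ⟨L, hL⟩ := ih (a + 1) h2 (by simp [hb])
      refine ⟨L + 1, ?_⟩
      unfold canon at hL ⊢
      rw [List.range_succ_eq_map, List.map_cons, List.map_map]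
      rw [hL]
      congr 1
      · simp
      · apply List.map_congr_left
        intro j _
        simp only [Function.comp_apply, Nat.succ_eq_add_one]
        push_cast
        ring

lemma natCast_inj_lt {n a b : ℕ} (ha : a < n) (hb : b < n) (h : (a : ZMod n) = b) : a = b := by
  haveI : NeZero n := ⟨by omega⟩
  rw [ZMod.natCast_eq_natCast_iff] at h
  have h' : a % n = b % n := h
  rwa [Nat.mod_eq_of_lt ha, Nat.mod_eq_of_lt hb] at h'

lemma shortest_iff {n : ℕ} (s : ZMod n) (m : ℕ) (hm : m < n) (l : List (ZMod n)) :
    IsShortestCWPath n l s (s + m) ↔ l = canon n s m := by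
  constructor
  · rintro ⟨hc, hh, hl, hmin⟩
    obtain ⟨L, rfl⟩ := cw_shape l s hc hh
    rw [canon_last, Option.some_inj] at hl
    have hLm : (L : ZMod n) = m := add_left_cancel hl
    have hle : L ≤ m := by
      have := hmin (canon n s m) (canon_cw n s m) (canon_head n s m)
        (by rw [canon_last])
      rw [canon_length, canon_length] at this
      omega
    have : L = m := natCast_inj_lt (by omega) hm hLm
    rw [this]
  · rintro rfl
    refine ⟨canon_cw n s m, canon_head n s m, by rw [canon_last], ?_⟩
    intro l' hc' hh' hl'
    obtain ⟨L, rfl⟩ := cw_shape l' s hc' hh'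
    rw [canon_last, Option.some_inj] at hl'
    have hLm : (L : ZMod n) = m := add_left_cancel hl'
    rw [canon_length, canon_length]
    rw [ZMod.natCast_eq_natCast_iff] at hLm
    have hLm' : L % n = m % n := hLm
    rw [Nat.mod_eq_of_lt hm] at hLm'
    have := Nat.mod_le L n
    omega

lemma mem_canon {n : ℕ} (v s : ZMod n) (m : ℕ) :
    v ∈ canon n s m ↔ ∃ j ≤ m, v = s + (j : ZMod n) := by
  simp only [canon, List.mem_map, List.mem_range]
  constructor
  · rintro ⟨j, hj, rfl⟩; exact ⟨j, by omega, rfl⟩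
  · rintro ⟨j, hj, rfl⟩; exact ⟨j, by omega, rfl⟩

theorem stmt_12 (n : ℕ) (hn : 8 ≤ n) (h4 : 4 ∣ n) :
    -- unique collection of shortest s_i-t_i paths, with s_i = i, t_i = i + 3n/4
    (∃! P : ZMod n → List (ZMod n),
        ∀ i : ZMod n, IsShortestCWPath n (P i) i (i + (3 * (n / 4) : ℕ))) ∧
    -- any such collection: every vertex has congestion exactly c = 3n/4 + 1,
    -- and no single path contains all vertices
    (∀ P : ZMod n → List (ZMod n),
        (∀ i : ZMod n, IsShortestCWPath n (P i) i (i + (3 * (n / 4) : ℕ))) →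
        (∀ v : ZMod n, Nat.card {i : ZMod n // v ∈ P i} = 3 * (n / 4) + 1) ∧
        (∀ i : ZMod n, ∃ v : ZMod n, v ∉ P i)) := by
  haveI : NeZero n := ⟨by omega⟩
  set m := 3 * (n / 4) with hmdef
  have hq : n / 4 * 4 = n := Nat.div_mul_cancel h4
  have hq2 : 2 ≤ n / 4 := by omega
  have hm1 : m + 1 < n := by omega
  have hm : m < n := by omega
  constructor
  · refine ⟨fun i => canon n i m, fun i => (shortest_iff i m hm _).mpr rfl, ?_⟩
    intro Q hQ
    funext i
    exact (shortest_iff i m hm _).mp (hQ i)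
  · intro P hP
    have hPc : ∀ i, P i = canon n i m := fun i => (shortest_iff i m hm _).mp (hP i)
    constructor
    · intro v
      rw [Nat.card_eq_fintype_card, Fintype.card_subtype]
      have hfe : (Finset.univ.filter (fun i => v ∈ P i)) =
          Finset.image (fun j : ℕ => v - (j : ZMod n)) (Finset.range (m + 1)) := by
        ext i
        simp only [Finset.mem_filter, Finset.mem_univ, true_and, Finset.mem_image,
          Finset.mem_range, hPc, mem_canon]
        constructor
        · rintro ⟨j, hj, rfl⟩
          exact ⟨j, by omega, by ring⟩
        · rintro ⟨j, hj, rfl⟩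
          exact ⟨j, by omega, by ring⟩
      rw [hfe, Finset.card_image_of_injOn, Finset.card_range]
      intro a ha b hb hab
      simp only [Finset.coe_range, Set.mem_Iio] at ha hb
      have : ((a : ℕ) : ZMod n) = ((b : ℕ) : ZMod n) := sub_right_injective hab
      exact natCast_inj_lt (by omega) (by omega) this
    · intro i
      refine ⟨i + ((m + 1 : ℕ) : ZMod n), ?_⟩
      rw [hPc, mem_canon]
      rintro ⟨j, hj, heq⟩
      have : ((m + 1 : ℕ) : ZMod n) = j := add_left_cancel heq
      have := natCast_inj_lt hm1 (by omega) this
      omega
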